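/- A POVM A is verifiably pure state informationally complete (every pure state is distinguishable by statistics from every other state, pure or mixed) if and only if every nonzero T in R(A)^⊥ satisfies rank±(T) ≥ 2, where rank±(T) is the minimum of the number of strictly positive and strictly negative eigenvalues of T. -/

import Mathlib

open Matrix Kronecker
open scoped ComplexOrder

noncomputable section

def IsPOVM {n : Type*} [Fintype n] [DecidableEq n] {m : ℕ}
    (A : Fin m → Matrix n n ℂ) : Prop :=
  (∀ x, (A x).PosSemidef) ∧ ∑ x, A x = 1

def IsState {n : Type*} [Fintype n] [DecidableEq n] (ρ : Matrix n n ℂ) : Prop :=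
  ρ.PosSemidef ∧ ρ.trace = 1

def IsPureState {n : Type*} [Fintype n] [DecidableEq n] (ρ : Matrix n n ℂ) : Prop :=
  ρ.IsHermitian ∧ ρ * ρ = ρ ∧ ρ.rank = 1

def Rspan {n : Type*} [Fintype n] [DecidableEq n] {ι : Type*}
    (A : ι → Matrix n n ℂ) : Submodule ℝ (Matrix n n ℂ) :=
  Submodule.span ℝ (Set.range A)

def RPerp {n : Type*} [Fintype n] [DecidableEq n] {m : ℕ}
    (A : Fin m → Matrix n n ℂ) : Set (Matrix n n ℂ) :=
  {T | T.IsHermitian ∧ ∀ S ∈ Rspan A, (S * T).trace = 0}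

def herm (n : Type*) [Fintype n] [DecidableEq n] : Submodule ℝ (Matrix n n ℂ) where
  carrier := {T | T.IsHermitian}
  add_mem' := fun h1 h2 => h1.add h2
  zero_mem' := Matrix.isHermitian_zero
  smul_mem' := fun c T h => by
    rw [Set.mem_setOf_eq, Matrix.IsHermitian, Matrix.conjTranspose_smul, star_trivial, h]

def hermPerp {n : Type*} [Fintype n] [DecidableEq n]
    (V : Submodule ℝ (Matrix n n ℂ)) : Submodule ℝ (Matrix n n ℂ) where
  carrier := {T | T.IsHermitian ∧ ∀ S ∈ V, (S * T).trace = 0}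
  add_mem' := fun h1 h2 => ⟨h1.1.add h2.1, fun S hS => by
    rw [mul_add, Matrix.trace_add, h1.2 S hS, h2.2 S hS, add_zero]⟩
  zero_mem' := ⟨Matrix.isHermitian_zero, fun S _ => by simp⟩
  smul_mem' := fun c T h => ⟨by
      rw [Matrix.IsHermitian, Matrix.conjTranspose_smul, star_trivial, h.1],
    fun S hS => by rw [Matrix.mul_smul, Matrix.trace_smul, h.2 S hS, smul_zero]⟩

def tensSub {nA nB : Type*} [Fintype nA] [DecidableEq nA] [Fintype nB] [DecidableEq nB]
    (U : Submodule ℝ (Matrix nA nA ℂ)) (V : Submodule ℝ (Matrix nB nB ℂ)) :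
    Submodule ℝ (Matrix (nA × nB) (nA × nB) ℂ) :=
  Submodule.span ℝ {T | ∃ S ∈ U, ∃ R ∈ V, T = S ⊗ₖ R}

noncomputable def rankPM {n : Type*} [Fintype n] [DecidableEq n]
    (T : Matrix n n ℂ) (hT : T.IsHermitian) : ℕ :=
  min (Finset.univ.filter fun i => 0 < hT.eigenvalues i).card
      (Finset.univ.filter fun i => hT.eigenvalues i < 0).card

/-- A POVM `A` is verifiably pure state informationally complete (every pure
state is distinguished by statistics from every other state) iff every nonzero
`T ∈ R(A)^⊥` has at least 2 strictly positive and 2 strictly negative eigenvalues. -/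
-- helpers
lemma trace_conj {d : ℕ} (U D : Matrix (Fin d) (Fin d) ℂ) (hU : star U * U = 1) :
    (U * D * star U).trace = D.trace := by
  rw [Matrix.trace_mul_cycle, hU, one_mul]

lemma isUnit_det_of_unitary {d : ℕ} (U : Matrix (Fin d) (Fin d) ℂ) (hU : star U * U = 1) :
    IsUnit U.det := by
  have := congrArg Matrix.det hU
  rw [Matrix.det_mul, Matrix.det_one] at this
  exact IsUnit.of_mul_eq_one _ (by rw [mul_comm]; exact this)

lemma isUnit_det_of_unitary' {d : ℕ} (U : Matrix (Fin d) (Fin d) ℂ) (hU : star U * U = 1) :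
    IsUnit (star U).det := by
  have := congrArg Matrix.det hU
  rw [Matrix.det_mul, Matrix.det_one] at this
  exact IsUnit.of_mul_eq_one _ this

lemma psd_conj {d : ℕ} (U D : Matrix (Fin d) (Fin d) ℂ) (hD : D.PosSemidef) :
    (U * D * star U).PosSemidef := by
  have := hD.mul_mul_conjTranspose_same U
  rwa [Matrix.star_eq_conjTranspose]

lemma herm_conj {d : ℕ} (U : Matrix (Fin d) (Fin d) ℂ) (μ : Fin d → ℝ) :
    (U * Matrix.diagonal (fun i => (μ i : ℂ)) * star U).IsHermitian := by
  rw [Matrix.star_eq_conjTranspose]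
  exact Matrix.isHermitian_mul_mul_conjTranspose U
    (Matrix.isHermitian_diagonal_of_self_adjoint _ (funext fun i => by
      simp [Pi.star_apply, Complex.star_def, Complex.conj_ofReal]))

def traceKer {n : Type*} [Fintype n] [DecidableEq n] (T : Matrix n n ℂ) :
    Submodule ℝ (Matrix n n ℂ) where
  carrier := {S | (S * T).trace = 0}
  add_mem' := fun h1 h2 => by
    simp only [Set.mem_setOf_eq] at *
    rw [add_mul, Matrix.trace_add, h1, h2, add_zero]
  zero_mem' := by simp
  smul_mem' := fun c S h => by
    simp only [Set.mem_setOf_eq] at *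
    rw [Matrix.smul_mul, Matrix.trace_smul, h, smul_zero]

lemma one_mem_Rspan {d m : ℕ} (A : Fin m → Matrix (Fin d) (Fin d) ℂ) (hA : IsPOVM A) :
    (1 : Matrix (Fin d) (Fin d) ℂ) ∈ Rspan A := by
  rw [← hA.2]
  exact Submodule.sum_mem _ fun x _ => Submodule.subset_span ⟨x, rfl⟩

lemma trace_eq_zero_of_mem_RPerp {d m : ℕ} {A : Fin m → Matrix (Fin d) (Fin d) ℂ}
    (hA : IsPOVM A) {T : Matrix (Fin d) (Fin d) ℂ} (hT : T ∈ RPerp A) : T.trace = 0 := by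
  have := hT.2 1 (one_mem_Rspan A hA)
  rwa [one_mul] at this

lemma sum_mu_eq_zero {d m : ℕ} {A : Fin m → Matrix (Fin d) (Fin d) ℂ}
    (hA : IsPOVM A) {T : Matrix (Fin d) (Fin d) ℂ} (hT : T ∈ RPerp A)
    {U : Matrix (Fin d) (Fin d) ℂ} (hU : star U * U = 1)
    {μ : Fin d → ℝ} (hTU : T = U * Matrix.diagonal (fun i => (μ i : ℂ)) * star U) :
    ∑ i, μ i = 0 := by
  have h0 : T.trace = 0 := trace_eq_zero_of_mem_RPerp hA hT
  rw [hTU, trace_conj _ _ hU, Matrix.trace_diagonal] at h0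
  have : ((∑ i, μ i : ℝ) : ℂ) = 0 := by push_cast; exact h0
  exact_mod_cast this

lemma diag_sub_eq {d : ℕ} (ν δ μ : Fin d → ℝ) (lam : ℝ) (hlam : 0 < lam)
    (h : ∀ i, ν i - δ i = μ i / lam) :
    Matrix.diagonal (fun i => (ν i : ℂ)) - Matrix.diagonal (fun i => (δ i : ℂ)) =
    ((lam:ℂ))⁻¹ • Matrix.diagonal (fun i => (μ i : ℂ)) := by
  have hl : (lam : ℂ) ≠ 0 := by exact_mod_cast hlam.ne'
  ext i j
  rcases eq_or_ne i j with rfl | hij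
  · simp only [Matrix.sub_apply, Matrix.smul_apply, Matrix.diagonal_apply_eq]
    have := h i
    have : ((ν i : ℂ)) - (δ i : ℂ) = (μ i : ℂ) / (lam : ℂ) := by exact_mod_cast this
    rw [this]
    rw [smul_eq_mul]
    field_simp
  · simp [Matrix.diagonal_apply_ne _ hij]

lemma key_forward {d m : ℕ} (A : Fin m → Matrix (Fin d) (Fin d) ℂ) (hA : IsPOVM A)
    (T : Matrix (Fin d) (Fin d) ℂ) (hT : T ∈ RPerp A) (hT0 : T ≠ 0)
    (U : Matrix (Fin d) (Fin d) ℂ) (hU : star U * U = 1)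
    (μ : Fin d → ℝ) (hTU : T = U * Matrix.diagonal (fun i => (μ i : ℂ)) * star U)
    (k : Fin d) (hk : μ k < 0) (hpos : ∀ i, i ≠ k → 0 ≤ μ i) :
    ∃ P ρ : Matrix (Fin d) (Fin d) ℂ, IsPureState P ∧ IsState ρ ∧ ρ ≠ P ∧
      ∀ x, (P * A x).trace = (ρ * A x).trace := by
  set lam : ℝ := -μ k with hlam
  have hlampos : 0 < lam := by simp [hlam]; linarith
  have hmk : μ k = -lam := by simp [hlam]
  have hlC : (lam : ℂ) ≠ 0 := by exact_mod_cast hlampos.ne'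
  set δ : Fin d → ℝ := fun i => if i = k then 1 else 0 with hδ
  set ν : Fin d → ℝ := fun i => if i = k then 0 else μ i / lam with hν
  set P := U * Matrix.diagonal (fun i => (δ i : ℂ)) * star U with hP
  set ρ := U * Matrix.diagonal (fun i => (ν i : ℂ)) * star U with hρ
  have hsum : ∑ i, μ i = 0 := sum_mu_eq_zero hA hT hU hTU
  -- ρ - P = lam⁻¹ • T
  have hdiff : ρ - P = ((lam:ℂ))⁻¹ • T := by
    rw [hρ, hP, hTU, ← Matrix.sub_mul, ← Matrix.mul_sub]
    rw [diag_sub_eq ν δ μ lam hlampos (fun i => by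
      by_cases h : i = k
      · subst h; simp [hν, hδ, hmk]; field_simp
      · simp [hν, hδ, h]), Matrix.mul_smul, Matrix.smul_mul]
  refine ⟨P, ρ, ⟨?_, ?_, ?_⟩, ⟨?_, ?_⟩, ?_, ?_⟩
  · exact herm_conj U δ
  · -- P * P = P
    rw [hP]
    have h1 : star U * U = 1 := hU
    calc (U * Matrix.diagonal (fun i => (δ i : ℂ)) * star U) *
          (U * Matrix.diagonal (fun i => (δ i : ℂ)) * star U)
        = U * (Matrix.diagonal (fun i => (δ i : ℂ)) * (star U * U) *
            Matrix.diagonal (fun i => (δ i : ℂ))) * star U := by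
          simp only [Matrix.mul_assoc]
      _ = U * Matrix.diagonal (fun i => (δ i : ℂ)) * star U := by
          rw [h1, Matrix.mul_one, Matrix.diagonal_mul_diagonal]
          have hfun : (fun i => ((δ i : ℂ)) * (δ i : ℂ)) = fun i => (δ i : ℂ) :=
            funext fun i => by by_cases h : i = k <;> simp [hδ, h]
          rw [hfun]
  · -- rank P = 1
    rw [hP, Matrix.rank_mul_eq_left_of_isUnit_det _ _ (isUnit_det_of_unitary' U hU),
      Matrix.rank_mul_eq_right_of_isUnit_det _ _ (isUnit_det_of_unitary U hU),
      Matrix.rank_diagonal]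
    have he : ∀ i : Fin d, ((δ i : ℂ) ≠ 0) ↔ i = k := by
      intro i; by_cases h : i = k <;> simp [hδ, h]
    rw [Fintype.card_congr (Equiv.subtypeEquivRight he), Fintype.card_subtype_eq]
  · -- ρ PSD
    exact psd_conj U _ (Matrix.posSemidef_diagonal_iff.mpr (fun i => by
      by_cases h : i = k
      · simp [hν, h]
      · have : (0:ℝ) ≤ ν i := by
          simp only [hν, if_neg h]
          exact div_nonneg (hpos i h) hlampos.le
        exact_mod_cast this))
  · -- trace ρ = 1
    rw [hρ, trace_conj _ _ hU, Matrix.trace_diagonal]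
    have hν' : ∀ i, ν i = μ i / lam + δ i := by
      intro i
      by_cases h : i = k
      · subst h; simp [hν, hδ, hmk]; field_simp; norm_num
      · simp [hν, hδ, h]
    have : ∑ i, ν i = 1 := by
      simp_rw [hν']
      rw [Finset.sum_add_distrib, ← Finset.sum_div, hsum]
      simp [hδ]
    exact_mod_cast congrArg (Complex.ofReal) this
  · -- ρ ≠ P
    intro h
    apply hT0
    have : ρ - P = 0 := by rw [h, sub_self]
    rw [hdiff] at this
    exact (smul_eq_zero.mp this).resolve_left (inv_ne_zero hlC)
  · -- statistics
    intro x
    have hx : ((A x) * T).trace = 0 := hT.2 _ (Submodule.subset_span ⟨x, rfl⟩)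
    have : ((ρ - P) * A x).trace = 0 := by
      rw [hdiff, Matrix.smul_mul, Matrix.trace_smul, Matrix.trace_mul_comm, hx, smul_zero]
    rw [Matrix.sub_mul, Matrix.trace_sub, sub_eq_zero] at this
    exact this.symm

lemma no_two_neg {d : ℕ} {ρ P : Matrix (Fin d) (Fin d) ℂ} (hρ : ρ.PosSemidef)
    (hP : IsPureState P) (hT : (ρ - P).IsHermitian) {i j : Fin d} (hij : i ≠ j)
    (hi : hT.eigenvalues i < 0) (hj : hT.eigenvalues j < 0) : False := by
  classical
  set T := ρ - P with hTdef
  set u : Fin d → ℂ := ⇑(hT.eigenvectorBasis i) with hu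
  set v : Fin d → ℂ := ⇑(hT.eigenvectorBasis j) with hv
  have hTu : T *ᵥ u = hT.eigenvalues i • u := hT.mulVec_eigenvectorBasis i
  have hTv : T *ᵥ v = hT.eigenvalues j • v := hT.mulVec_eigenvectorBasis j
  have horth := hT.eigenvectorBasis.orthonormal
  rw [orthonormal_iff_ite] at horth
  have huu : dotProduct (star u) u = 1 := by
    have := horth i i
    simp only [if_pos rfl] at this
    rw [EuclideanSpace.inner_eq_star_dotProduct, dotProduct_comm, if_pos trivial] at this
    exact this
  have hvv : dotProduct (star v) v = 1 := by
    have := horth j j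
    simp only [if_pos rfl] at this
    rw [EuclideanSpace.inner_eq_star_dotProduct, dotProduct_comm, if_pos trivial] at this
    exact this
  have huv : dotProduct (star u) v = 0 := by
    have := horth i j
    simp only [if_neg hij] at this
    rw [EuclideanSpace.inner_eq_star_dotProduct, dotProduct_comm] at this
    exact this
  have hvu : dotProduct (star v) u = 0 := by
    have := horth j i
    simp only [if_neg hij.symm] at this
    rw [EuclideanSpace.inner_eq_star_dotProduct, dotProduct_comm] at this
    exact this
  -- P has rank 1: the images P *ᵥ u and P *ᵥ v are linearly dependent
  have hfin : Module.finrank ℂ (LinearMap.range P.mulVecLin) = 1 := hP.2.2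
  set a : LinearMap.range P.mulVecLin := ⟨P *ᵥ u, ⟨u, by simp [Matrix.mulVecLin_apply]⟩⟩
  set b : LinearMap.range P.mulVecLin := ⟨P *ᵥ v, ⟨v, by simp [Matrix.mulVecLin_apply]⟩⟩
  have hdep : ¬ LinearIndependent ℂ ![a, b] := by
    intro hli
    have := hli.fintype_card_le_finrank
    rw [hfin, Fintype.card_fin] at this
    omega
  rw [Fintype.not_linearIndependent_iff] at hdep
  obtain ⟨g, hg, ⟨t, hgt⟩⟩ := hdep
  have hgsum : g 0 • (P *ᵥ u) + g 1 • (P *ᵥ v) = 0 := by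
    have := congrArg (Subtype.val) hg
    simpa [Fin.sum_univ_two] using this
  set c₀ := g 0
  set c₁ := g 1
  have hc : c₀ ≠ 0 ∨ c₁ ≠ 0 := by
    rcases t with ⟨tv, ht⟩
    interval_cases tv
    · exact Or.inl hgt
    · exact Or.inr hgt
  set w : Fin d → ℂ := c₀ • u + c₁ • v with hw
  have hPw : P *ᵥ w = 0 := by
    rw [hw, Matrix.mulVec_add, Matrix.mulVec_smul, Matrix.mulVec_smul]
    exact hgsum
  have hpsd := hρ.dotProduct_mulVec_nonneg w
  have hρeq : ρ = T + P := by rw [hTdef]; abel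
  have key : dotProduct (star w) (ρ *ᵥ w) =
      ((Complex.normSq c₀ * hT.eigenvalues i + Complex.normSq c₁ * hT.eigenvalues j : ℝ) : ℂ) := by
    rw [hρeq, Matrix.add_mulVec]
    have h2 : dotProduct (star w) (P *ᵥ w) = 0 := by rw [hPw, dotProduct_zero]
    rw [dotProduct_add, h2, add_zero]
    rw [hw, Matrix.mulVec_add, Matrix.mulVec_smul, Matrix.mulVec_smul, hTu, hTv]
    rw [star_add, star_smul, star_smul]
    simp only [add_dotProduct, dotProduct_add, smul_dotProduct,
      dotProduct_smul, huu, hvv, huv, hvu, smul_smul, smul_zero, add_zero, zero_add,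
      smul_eq_mul, mul_one, mul_zero, add_zero, zero_add]
    rw [Complex.real_smul, Complex.real_smul]
    have e0 : c₀ * ((hT.eigenvalues i : ℂ) * star c₀) =
        ((Complex.normSq c₀ : ℝ) : ℂ) * (hT.eigenvalues i : ℂ) := by
      rw [Complex.star_def, show c₀ * ((hT.eigenvalues i:ℂ) * (starRingEnd ℂ) c₀) =
        (c₀ * (starRingEnd ℂ) c₀) * (hT.eigenvalues i:ℂ) from by ring, Complex.mul_conj]
    have e1 : c₁ * ((hT.eigenvalues j : ℂ) * star c₁) =
        ((Complex.normSq c₁ : ℝ) : ℂ) * (hT.eigenvalues j : ℂ) := by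
      rw [Complex.star_def, show c₁ * ((hT.eigenvalues j:ℂ) * (starRingEnd ℂ) c₁) =
        (c₁ * (starRingEnd ℂ) c₁) * (hT.eigenvalues j:ℂ) from by ring, Complex.mul_conj]
    rw [e0, e1]
    push_cast
    ring
  -- conclude
  have hneg : (Complex.normSq c₀ * hT.eigenvalues i + Complex.normSq c₁ * hT.eigenvalues j : ℝ) < 0 := by
    rcases hc with h | h
    · have h0 : 0 < Complex.normSq c₀ := Complex.normSq_pos.mpr h
      have : Complex.normSq c₀ * hT.eigenvalues i < 0 := mul_neg_of_pos_of_neg h0 hi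
      have h1 : Complex.normSq c₁ * hT.eigenvalues j ≤ 0 :=
        mul_nonpos_of_nonneg_of_nonpos (Complex.normSq_nonneg _) hj.le
      linarith
    · have h0 : 0 < Complex.normSq c₁ := Complex.normSq_pos.mpr h
      have : Complex.normSq c₁ * hT.eigenvalues j < 0 := mul_neg_of_pos_of_neg h0 hj
      have h1 : Complex.normSq c₀ * hT.eigenvalues i ≤ 0 :=
        mul_nonpos_of_nonneg_of_nonpos (Complex.normSq_nonneg _) hi.le
      linarith
  rw [key] at hpsd
  have : ((Complex.normSq c₀ * hT.eigenvalues i + Complex.normSq c₁ * hT.eigenvalues j : ℝ) : ℂ) < 0 := by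
    exact_mod_cast hneg
  exact absurd hpsd (not_le_of_gt this)

theorem stmt16 {d m : ℕ} (A : Fin m → Matrix (Fin d) (Fin d) ℂ) (hA : IsPOVM A) :
    (∀ P ρ : Matrix (Fin d) (Fin d) ℂ, IsPureState P → IsState ρ → ρ ≠ P →
      ∃ x, (P * A x).trace ≠ (ρ * A x).trace) ↔
    (∀ T ∈ RPerp A, T ≠ 0 → ∀ hT : T.IsHermitian, 2 ≤ rankPM T hT) := by
  constructor
  · -- forward: distinguishability → rank condition
    intro hdist T hTperp hT0 hT
    by_contra hlt
    push_neg at hlt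
    set μ : Fin d → ℝ := hT.eigenvalues with hμ
    set U : Matrix (Fin d) (Fin d) ℂ := (hT.eigenvectorUnitary : Matrix (Fin d) (Fin d) ℂ)
      with hUdef
    have hU : star U * U = 1 := Matrix.mem_unitaryGroup_iff'.mp hT.eigenvectorUnitary.2
    have hTU : T = U * Matrix.diagonal (fun i => (μ i : ℂ)) * star U := hT.spectral_theorem
    have hsum : ∑ i, μ i = 0 := sum_mu_eq_zero hA hTperp hU hTU
    have hrank : rankPM T hT =
        min (Finset.univ.filter fun i => 0 < μ i).card
          (Finset.univ.filter fun i => μ i < 0).card := rfl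
    rw [hrank] at hlt
    set p := (Finset.univ.filter fun i => 0 < μ i).card with hp
    set q := (Finset.univ.filter fun i => μ i < 0).card with hq
    have hTzero : (∀ i, μ i = 0) → False := by
      intro hall
      apply hT0
      rw [hTU]
      have : (fun i => (μ i : ℂ)) = fun _ => (0 : ℂ) := funext fun i => by rw [hall i]; simp
      rw [this, Matrix.diagonal_zero, Matrix.mul_zero, Matrix.zero_mul]
    have hcase : q = 0 ∨ q = 1 ∨ p = 0 ∨ p = 1 := by omega
    have hcontra : ∀ P ρ : Matrix (Fin d) (Fin d) ℂ, IsPureState P → IsState ρ → ρ ≠ P →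
        (∀ x, (P * A x).trace = (ρ * A x).trace) → False := by
      intro P ρ h1 h2 h3 h4
      obtain ⟨x, hx⟩ := hdist P ρ h1 h2 h3
      exact hx (h4 x)
    rcases hcase with h | h | h | h
    · -- no negative eigenvalues: T = 0
      rw [hq, Finset.card_eq_zero, Finset.filter_eq_empty_iff] at h
      apply hTzero
      intro i
      have := (Finset.sum_eq_zero_iff_of_nonneg (fun i _ => le_of_not_gt (h (Finset.mem_univ i)))).mp
        hsum i (Finset.mem_univ i)
      exact this
    · -- exactly one negative eigenvalue
      rw [hq, Finset.card_eq_one] at h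
      obtain ⟨k, hk⟩ := h
      have hkneg : μ k < 0 := by
        have : k ∈ Finset.univ.filter fun i => μ i < 0 := by rw [hk]; exact Finset.mem_singleton_self k
        exact (Finset.mem_filter.mp this).2
      have hkpos : ∀ i, i ≠ k → 0 ≤ μ i := by
        intro i hik
        by_contra hneg
        push_neg at hneg
        have : i ∈ Finset.univ.filter fun i => μ i < 0 := Finset.mem_filter.mpr ⟨Finset.mem_univ i, hneg⟩
        rw [hk, Finset.mem_singleton] at this
        exact hik this
      obtain ⟨P, ρ, h1, h2, h3, h4⟩ := key_forward A hA T hTperp hT0 U hU μ hTU k hkneg hkpos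
      exact hcontra P ρ h1 h2 h3 h4
    · -- no positive eigenvalues: T = 0
      rw [hp, Finset.card_eq_zero, Finset.filter_eq_empty_iff] at h
      apply hTzero
      intro i
      have h2 : ∑ i, (-μ) i = 0 := by
        simp only [Pi.neg_apply]
        rw [Finset.sum_neg_distrib, hsum, neg_zero]
      have := (Finset.sum_eq_zero_iff_of_nonneg (fun i _ => by
        simpa using le_of_not_gt (h (Finset.mem_univ i)))).mp h2 i (Finset.mem_univ i)
      simpa using this
    · -- exactly one positive eigenvalue: apply to -T
      rw [hp, Finset.card_eq_one] at h
      obtain ⟨k, hk⟩ := h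
      have hkneg : μ k > 0 := by
        have : k ∈ Finset.univ.filter fun i => 0 < μ i := by rw [hk]; exact Finset.mem_singleton_self k
        exact (Finset.mem_filter.mp this).2
      have hkpos : ∀ i, i ≠ k → μ i ≤ 0 := by
        intro i hik
        by_contra hneg
        push_neg at hneg
        have : i ∈ Finset.univ.filter fun i => 0 < μ i := Finset.mem_filter.mpr ⟨Finset.mem_univ i, hneg⟩
        rw [hk, Finset.mem_singleton] at this
        exact hik this
      have hnegperp : -T ∈ RPerp A := by
        refine ⟨hTperp.1.neg, fun S hS => ?_⟩
        rw [Matrix.mul_neg, Matrix.trace_neg, hTperp.2 S hS, neg_zero]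
      have hnegTU : -T = U * Matrix.diagonal (fun i => ((-μ i : ℝ) : ℂ)) * star U := by
        rw [hTU]
        have : Matrix.diagonal (fun i => ((-μ i : ℝ) : ℂ)) =
            -Matrix.diagonal (fun i => (μ i : ℂ)) := by
          rw [Matrix.diagonal_neg]
          push_cast
          rfl
        rw [this, Matrix.mul_neg, Matrix.neg_mul]
      obtain ⟨P, ρ, h1, h2, h3, h4⟩ := key_forward A hA (-T) hnegperp (neg_ne_zero.mpr hT0) U hU
        (fun i => -μ i) hnegTU k (by show -μ k < 0; linarith)
        (fun i hik => by show (0:ℝ) ≤ -μ i; have := hkpos i hik; linarith)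
      exact hcontra P ρ h1 h2 h3 h4
  · -- backward: rank condition → distinguishability
    intro hcond P ρ hP hρ hne
    by_contra hno
    push_neg at hno
    set T := ρ - P with hTdef
    have hTh : T.IsHermitian := hρ.1.1.sub hP.1
    have hTR : T ∈ RPerp A := by
      refine ⟨hTh, fun S hS => ?_⟩
      have hle : Rspan A ≤ traceKer T := by
        rw [Rspan, Submodule.span_le]
        rintro S ⟨x, rfl⟩
        show (A x * T).trace = 0
        rw [hTdef, Matrix.mul_sub, Matrix.trace_sub, Matrix.trace_mul_comm,
          Matrix.trace_mul_comm (A x) P, sub_eq_zero]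
        exact (hno x).symm
      exact hle hS
    have hT0 : T ≠ 0 := sub_ne_zero.mpr hne
    have h2 := hcond T hTR hT0 hTh
    have hq : 2 ≤ (Finset.univ.filter fun i => hTh.eigenvalues i < 0).card :=
      le_trans h2 (min_le_right _ _)
    obtain ⟨i, hi, j, hj, hij⟩ := Finset.one_lt_card.mp
      (show 1 < (Finset.univ.filter fun i => hTh.eigenvalues i < 0).card by omega)
    exact no_two_neg hρ.1 hP hTh hij (Finset.mem_filter.mp hi).2 (Finset.mem_filter.mp hj).2
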